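/- Let ρ : Z₂ → ℝ be strictly monotone and let (x̄₁, x̄₂(·)) be any optimal policy of min ρ(f₁(x₁) + f₂(x₂(·),·)) over feasible policies. Then for a.e. ω, x̄₂(ω) is optimal for the conditional problem min_{x₂ ∈ X₂(x̄₁,ω)} f₂(x₂,ω), provided a measurable selection x̂₂(ω) of conditional minimizers exists. -/

import Mathlib

open MeasureTheory

/-- if ρ is strictly monotone and (x̄₁, x̄₂(·)) is *any* optimal
feasible policy of min ρ(f₁(x₁) + f₂(x₂(·),·)), then, provided a (measurable,
feasible) selection x̂₂ of conditional minimizers exists, for a.e. ω the decision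
x̄₂(ω) is optimal for the conditional problem min_{y ∈ X₂(x̄₁,ω)} f₂(y,ω). -/
theorem stmt13 {Ω X E : Type*} [MeasurableSpace Ω] (P : Measure Ω)
    [IsProbabilityMeasure P]
    (ρ : (Ω → ℝ) → ℝ)
    (hmono : ∀ V W : Ω → ℝ, (∀ᵐ ω ∂P, V ω ≤ W ω) → ρ V ≤ ρ W)
    (hstrict : ∀ V W : Ω → ℝ, (∀ᵐ ω ∂P, V ω ≤ W ω) →
      0 < P {ω | V ω < W ω} → ρ V < ρ W)
    (X₁ : Set X) (X₂ : X → Ω → Set E) (f₁ : X → ℝ) (f₂ : E → Ω → ℝ)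
    (xb₁ : X) (xb₂ : Ω → E)
    (hfeas₁ : xb₁ ∈ X₁) (hfeas₂ : ∀ᵐ ω ∂P, xb₂ ω ∈ X₂ xb₁ ω)
    (hopt : ∀ x₁ ∈ X₁, ∀ x₂ : Ω → E, (∀ᵐ ω ∂P, x₂ ω ∈ X₂ x₁ ω) →
      ρ (fun ω => f₁ xb₁ + f₂ (xb₂ ω) ω) ≤ ρ (fun ω => f₁ x₁ + f₂ (x₂ ω) ω))
    (xh₂ : Ω → E)
    (hsel_feas : ∀ᵐ ω ∂P, xh₂ ω ∈ X₂ xb₁ ω)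
    (hsel_min : ∀ᵐ ω ∂P, ∀ y ∈ X₂ xb₁ ω, f₂ (xh₂ ω) ω ≤ f₂ y ω) :
    ∀ᵐ ω ∂P, ∀ y ∈ X₂ xb₁ ω, f₂ (xb₂ ω) ω ≤ f₂ y ω := by
  set V : Ω → ℝ := fun ω => f₁ xb₁ + f₂ (xh₂ ω) ω with hV
  set W : Ω → ℝ := fun ω => f₁ xb₁ + f₂ (xb₂ ω) ω with hW
  have hle : ∀ᵐ ω ∂P, V ω ≤ W ω := by
    filter_upwards [hfeas₂, hsel_min] with ω h1 h2
    exact add_le_add_right (h2 _ h1) _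
  have hnot : ¬ ρ V < ρ W := not_lt.mpr (hopt xb₁ hfeas₁ xh₂ hsel_feas)
  have hzero : P {ω | V ω < W ω} = 0 := by
    by_contra h
    exact hnot (hstrict V W hle (pos_iff_ne_zero.mpr h))
  have hae : ∀ᵐ ω ∂P, ¬ (V ω < W ω) := by
    rw [ae_iff]; simpa using hzero
  filter_upwards [hae, hsel_min] with ω h1 h2 y hy
  have : f₂ (xb₂ ω) ω ≤ f₂ (xh₂ ω) ω := by
    have := not_lt.mp h1
    simpa [hV, hW] using this
  exact this.trans (h2 y hy)
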